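/- IA₁ proves the negative translation (DNS₁)^g of every instance of DNS₁; therefore, for any system S with IA₁ ⊆ S ⊆ B, the minimum classical extension of S + DNS₁ is S^{+g} + DNS₁. -/

import Mathlib

/-!
A deep embedding of the two-sorted language of intuitionistic analysis
(Kleene-Vesley), with number variables and one-place function (choice
sequence) variables, finitely many constants for primitive recursive
function(al)s (successor, +, ·, truncated subtraction ∸, pairing ⟨·,·⟩,
finite-sequence coding: concatenation *, singleton code ⟨s⟩, empty code ⟨⟩,
length lh, the Seq predicate, Kleene's T-predicate and U-function, and the
course-of-values functional ᾱ(x)), λ-abstraction with λ-reduction,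
intuitionistic two-sorted predicate logic, the Gödel–Gentzen negative
translation g, and the axiom schemas of the paper
"Calibrating the negative interpretation" (J.R. Moschovakis).
-/

namespace NegInterp

/-! Terms (type 0) and functors (type 1). -/
mutual
inductive Term : Type
  | var   : ℕ → Term
  | zero  : Term
  | succ  : Term → Term
  | add   : Term → Term → Term
  | mul   : Term → Term → Term
  | sub   : Term → Term → Term           -- truncated subtraction
  | pair  : Term → Term → Term           -- ⟨s,t⟩
  | cat   : Term → Term → Term           -- concatenation w ∗ v of sequence codes
  | sing  : Term → Term                  -- ⟨s⟩
  | empt  : Term                         -- ⟨ ⟩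
  | lh    : Term → Term                  -- length of a sequence code
  | seqc  : Term → Term                  -- characteristic function of Seq
  | kT    : Term → Term → Term → Term    -- characteristic function of Kleene's T
  | kU    : Term → Term                  -- Kleene's result-extraction U
  | app   : Func → Term → Term           -- φ(t)
  | bar   : Func → Term → Term           -- ᾱ(t), the code of (α(0),…,α(t−1))
inductive Func : Type
  | fvar : ℕ → Func
  | lam  : ℕ → Term → Func               -- λx.t
end

open Term Func

/-- Coding of finite sequences of naturals by naturals (every natural is a code). -/
def listCode (l : List ℕ) : ℕ := Encodable.encode l
def listDec (n : ℕ) : List ℕ := Denumerable.ofNat (List ℕ) n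

/-- Kleene's T-predicate: y codes a (fuel, value) pair witnessing that the
machine with code e halts on input x with the given value. -/
def KTmeta (e x y : ℕ) : Prop :=
  Nat.Partrec.Code.evaln y.unpair.1 (Denumerable.ofNat Nat.Partrec.Code e) x = some y.unpair.2

instance (e x y : ℕ) : Decidable (KTmeta e x y) := by unfold KTmeta; infer_instance

/-! Standard (full classical ω-model) interpretation of terms and functors,
used only to state the defining axioms of the primitive recursive constants. -/
mutual
def evalT (ρ : ℕ → ℕ) (σ : ℕ → ℕ → ℕ) : Term → ℕ
  | .var n => ρ n
  | .zero => 0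
  | .succ t => evalT ρ σ t + 1
  | .add s t => evalT ρ σ s + evalT ρ σ t
  | .mul s t => evalT ρ σ s * evalT ρ σ t
  | .sub s t => evalT ρ σ s - evalT ρ σ t
  | .pair s t => Nat.pair (evalT ρ σ s) (evalT ρ σ t)
  | .cat s t => listCode (listDec (evalT ρ σ s) ++ listDec (evalT ρ σ t))
  | .sing t => listCode [evalT ρ σ t]
  | .empt => listCode []
  | .lh t => (listDec (evalT ρ σ t)).length
  | .seqc _ => 0      -- under this coding every number codes a finite sequence
  | .kT e x y => if KTmeta (evalT ρ σ e) (evalT ρ σ x) (evalT ρ σ y) then 0 else 1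
  | .kU y => (Nat.unpair (evalT ρ σ y)).2
  | .app φ t => evalF ρ σ φ (evalT ρ σ t)
  | .bar φ t => listCode ((List.range (evalT ρ σ t)).map (evalF ρ σ φ))
def evalF (ρ : ℕ → ℕ) (σ : ℕ → ℕ → ℕ) : Func → ℕ → ℕ
  | .fvar n => σ n
  | .lam x t => fun m => evalT (Function.update ρ x m) σ t
end

/-! Free number variables of a term / functor. -/
mutual
def tFN : Term → Set ℕ
  | .var n => {n}
  | .zero => ∅
  | .empt => ∅
  | .succ t => tFN t
  | .sing t => tFN t
  | .lh t => tFN t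
  | .seqc t => tFN t
  | .kU t => tFN t
  | .add s t => tFN s ∪ tFN t
  | .mul s t => tFN s ∪ tFN t
  | .sub s t => tFN s ∪ tFN t
  | .pair s t => tFN s ∪ tFN t
  | .cat s t => tFN s ∪ tFN t
  | .kT e x y => tFN e ∪ tFN x ∪ tFN y
  | .app φ t => fFN φ ∪ tFN t
  | .bar φ t => fFN φ ∪ tFN t
def fFN : Func → Set ℕ
  | .fvar _ => ∅
  | .lam x t => tFN t \ {x}
end

/-! Free function variables of a term / functor. -/
mutual
def tFF : Term → Set ℕ
  | .var _ => ∅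
  | .zero => ∅
  | .empt => ∅
  | .succ t => tFF t
  | .sing t => tFF t
  | .lh t => tFF t
  | .seqc t => tFF t
  | .kU t => tFF t
  | .add s t => tFF s ∪ tFF t
  | .mul s t => tFF s ∪ tFF t
  | .sub s t => tFF s ∪ tFF t
  | .pair s t => tFF s ∪ tFF t
  | .cat s t => tFF s ∪ tFF t
  | .kT e x y => tFF e ∪ tFF x ∪ tFF y
  | .app φ t => fFF φ ∪ tFF t
  | .bar φ t => fFF φ ∪ tFF t
def fFF : Func → Set ℕ
  | .fvar a => {a}
  | .lam _ t => tFF t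
end

/-! Substitution of a term for a number variable in terms / functors. -/
mutual
def tSubN (n : ℕ) (u : Term) : Term → Term
  | .var m => if m = n then u else .var m
  | .zero => .zero
  | .empt => .empt
  | .succ t => .succ (tSubN n u t)
  | .sing t => .sing (tSubN n u t)
  | .lh t => .lh (tSubN n u t)
  | .seqc t => .seqc (tSubN n u t)
  | .kU t => .kU (tSubN n u t)
  | .add s t => .add (tSubN n u s) (tSubN n u t)
  | .mul s t => .mul (tSubN n u s) (tSubN n u t)
  | .sub s t => .sub (tSubN n u s) (tSubN n u t)
  | .pair s t => .pair (tSubN n u s) (tSubN n u t)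
  | .cat s t => .cat (tSubN n u s) (tSubN n u t)
  | .kT e x y => .kT (tSubN n u e) (tSubN n u x) (tSubN n u y)
  | .app φ t => .app (fSubN n u φ) (tSubN n u t)
  | .bar φ t => .bar (fSubN n u φ) (tSubN n u t)
def fSubN (n : ℕ) (u : Term) : Func → Func
  | .fvar a => .fvar a
  | .lam x t => if x = n then .lam x t else .lam x (tSubN n u t)
end

/-! Substitution of a functor for a function variable in terms / functors. -/
mutual
def tSubF (a : ℕ) (ψ : Func) : Term → Term
  | .var m => .var m
  | .zero => .zero
  | .empt => .empt
  | .succ t => .succ (tSubF a ψ t)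
  | .sing t => .sing (tSubF a ψ t)
  | .lh t => .lh (tSubF a ψ t)
  | .seqc t => .seqc (tSubF a ψ t)
  | .kU t => .kU (tSubF a ψ t)
  | .add s t => .add (tSubF a ψ s) (tSubF a ψ t)
  | .mul s t => .mul (tSubF a ψ s) (tSubF a ψ t)
  | .sub s t => .sub (tSubF a ψ s) (tSubF a ψ t)
  | .pair s t => .pair (tSubF a ψ s) (tSubF a ψ t)
  | .cat s t => .cat (tSubF a ψ s) (tSubF a ψ t)
  | .kT e x y => .kT (tSubF a ψ e) (tSubF a ψ x) (tSubF a ψ y)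
  | .app φ t => .app (fSubF a ψ φ) (tSubF a ψ t)
  | .bar φ t => .bar (fSubF a ψ φ) (tSubF a ψ t)
def fSubF (a : ℕ) (ψ : Func) : Func → Func
  | .fvar b => if b = a then ψ else .fvar b
  | .lam x t => .lam x (tSubF a ψ t)
end

/-! "u is free for (the number variable) n" in a term/functor
(no free occurrence of n lies within a λ binding a variable free in u). -/
mutual
def tFForN (u : Term) (n : ℕ) : Term → Prop
  | .var _ => True
  | .zero => True
  | .empt => True
  | .succ t => tFForN u n t
  | .sing t => tFForN u n t
  | .lh t => tFForN u n t
  | .seqc t => tFForN u n t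
  | .kU t => tFForN u n t
  | .add s t => tFForN u n s ∧ tFForN u n t
  | .mul s t => tFForN u n s ∧ tFForN u n t
  | .sub s t => tFForN u n s ∧ tFForN u n t
  | .pair s t => tFForN u n s ∧ tFForN u n t
  | .cat s t => tFForN u n s ∧ tFForN u n t
  | .kT e x y => tFForN u n e ∧ tFForN u n x ∧ tFForN u n y
  | .app φ t => fFForN u n φ ∧ tFForN u n t
  | .bar φ t => fFForN u n φ ∧ tFForN u n t
def fFForN (u : Term) (n : ℕ) : Func → Prop
  | .fvar _ => True
  | .lam x t => x = n ∨ n ∉ tFN t ∨ (x ∉ tFN u ∧ tFForN u n t)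
end

/-! "ψ is free for (the function variable) a" in a term/functor. -/
mutual
def tFForF (ψ : Func) (a : ℕ) : Term → Prop
  | .var _ => True
  | .zero => True
  | .empt => True
  | .succ t => tFForF ψ a t
  | .sing t => tFForF ψ a t
  | .lh t => tFForF ψ a t
  | .seqc t => tFForF ψ a t
  | .kU t => tFForF ψ a t
  | .add s t => tFForF ψ a s ∧ tFForF ψ a t
  | .mul s t => tFForF ψ a s ∧ tFForF ψ a t
  | .sub s t => tFForF ψ a s ∧ tFForF ψ a t
  | .pair s t => tFForF ψ a s ∧ tFForF ψ a t
  | .cat s t => tFForF ψ a s ∧ tFForF ψ a t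
  | .kT e x y => tFForF ψ a e ∧ tFForF ψ a x ∧ tFForF ψ a y
  | .app φ t => fFForF ψ a φ ∧ tFForF ψ a t
  | .bar φ t => fFForF ψ a φ ∧ tFForF ψ a t
def fFForF (ψ : Func) (a : ℕ) : Func → Prop
  | .fvar _ => True
  | .lam x t => a ∉ tFF t ∨ (x ∉ fFN ψ ∧ tFForF ψ a t)
end

/-- Formulas of the two-sorted language; prime formulas are equations between
terms of type 0 (equality of type 1 is defined extensionally). -/
inductive Formula : Type
  | eq     : Term → Term → Formula
  | falsum : Formula
  | and    : Formula → Formula → Formula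
  | or     : Formula → Formula → Formula
  | imp    : Formula → Formula → Formula
  | allN   : ℕ → Formula → Formula
  | exN    : ℕ → Formula → Formula
  | allF   : ℕ → Formula → Formula
  | exF    : ℕ → Formula → Formula

namespace Formula

/-- ¬A -/
def neg (A : Formula) : Formula := A.imp .falsum
/-- ¬¬A -/
def nneg (A : Formula) : Formula := neg (neg A)
/-- A ↔ B -/
def iff (A B : Formula) : Formula := (A.imp B).and (B.imp A)

end Formula

open Formula

/-- s ≤ t, expressed by the primitive recursive constant ∸. -/
def tle (s t : Term) : Formula := .eq (Term.sub s t) Term.zero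
/-- s < t -/
def tlt (s t : Term) : Formula := tle (Term.succ s) t
/-- Seq(w) : w codes a finite sequence. -/
def seqF (t : Term) : Formula := .eq (Term.seqc t) Term.zero

/-- Free number variables of a formula. -/
def freeN : Formula → Set ℕ
  | .eq s t => tFN s ∪ tFN t
  | .falsum => ∅
  | .and A B => freeN A ∪ freeN B
  | .or A B => freeN A ∪ freeN B
  | .imp A B => freeN A ∪ freeN B
  | .allN x A => freeN A \ {x}
  | .exN x A => freeN A \ {x}
  | .allF _ A => freeN A
  | .exF _ A => freeN A

/-- Free function variables of a formula. -/
def freeF : Formula → Set ℕ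
  | .eq s t => tFF s ∪ tFF t
  | .falsum => ∅
  | .and A B => freeF A ∪ freeF B
  | .or A B => freeF A ∪ freeF B
  | .imp A B => freeF A ∪ freeF B
  | .allN _ A => freeF A
  | .exN _ A => freeF A
  | .allF a A => freeF A \ {a}
  | .exF a A => freeF A \ {a}

/-- Substitution A[u/n] of a term u for the number variable n. -/
def subN (n : ℕ) (u : Term) : Formula → Formula
  | .eq s t => .eq (tSubN n u s) (tSubN n u t)
  | .falsum => .falsum
  | .and A B => .and (subN n u A) (subN n u B)
  | .or A B => .or (subN n u A) (subN n u B)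
  | .imp A B => .imp (subN n u A) (subN n u B)
  | .allN x A => if x = n then .allN x A else .allN x (subN n u A)
  | .exN x A => if x = n then .exN x A else .exN x (subN n u A)
  | .allF a A => .allF a (subN n u A)
  | .exF a A => .exF a (subN n u A)

/-- Substitution A[ψ/a] of a functor ψ for the function variable a. -/
def subF (a : ℕ) (ψ : Func) : Formula → Formula
  | .eq s t => .eq (tSubF a ψ s) (tSubF a ψ t)
  | .falsum => .falsum
  | .and A B => .and (subF a ψ A) (subF a ψ B)
  | .or A B => .or (subF a ψ A) (subF a ψ B)
  | .imp A B => .imp (subF a ψ A) (subF a ψ B)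
  | .allN x A => .allN x (subF a ψ A)
  | .exN x A => .exN x (subF a ψ A)
  | .allF b A => if b = a then .allF b A else .allF b (subF a ψ A)
  | .exF b A => if b = a then .exF b A else .exF b (subF a ψ A)

/-- "The term u is free for the number variable n in A". -/
def FreeForN (u : Term) (n : ℕ) : Formula → Prop
  | .eq s t => tFForN u n s ∧ tFForN u n t
  | .falsum => True
  | .and A B => FreeForN u n A ∧ FreeForN u n B
  | .or A B => FreeForN u n A ∧ FreeForN u n B
  | .imp A B => FreeForN u n A ∧ FreeForN u n B
  | .allN m A => m = n ∨ n ∉ freeN A ∨ (m ∉ tFN u ∧ FreeForN u n A)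
  | .exN m A => m = n ∨ n ∉ freeN A ∨ (m ∉ tFN u ∧ FreeForN u n A)
  | .allF b A => n ∉ freeN A ∨ (b ∉ tFF u ∧ FreeForN u n A)
  | .exF b A => n ∉ freeN A ∨ (b ∉ tFF u ∧ FreeForN u n A)

/-- "The functor ψ is free for the function variable a in A". -/
def FreeForF (ψ : Func) (a : ℕ) : Formula → Prop
  | .eq s t => tFForF ψ a s ∧ tFForF ψ a t
  | .falsum => True
  | .and A B => FreeForF ψ a A ∧ FreeForF ψ a B
  | .or A B => FreeForF ψ a A ∧ FreeForF ψ a B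
  | .imp A B => FreeForF ψ a A ∧ FreeForF ψ a B
  | .allN m A => a ∉ freeF A ∨ (m ∉ fFN ψ ∧ FreeForF ψ a A)
  | .exN m A => a ∉ freeF A ∨ (m ∉ fFN ψ ∧ FreeForF ψ a A)
  | .allF b A => b = a ∨ a ∉ freeF A ∨ (b ∉ fFF ψ ∧ FreeForF ψ a A)
  | .exF b A => b = a ∨ a ∉ freeF A ∨ (b ∉ fFF ψ ∧ FreeForF ψ a A)

/-- Derivability from a set of (mathematical) axioms by two-sorted
intuitionistic predicate logic with equality at type 0 as sole prime relation;
a Hilbert-style system with modus ponens and generalization. -/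
inductive Prov (T : Set Formula) : Formula → Prop
  | ax {A : Formula} (h : A ∈ T) : Prov T A
  | k {A B : Formula} : Prov T (A.imp (B.imp A))
  | s {A B C : Formula} : Prov T ((A.imp (B.imp C)).imp ((A.imp B).imp (A.imp C)))
  | andI {A B : Formula} : Prov T (A.imp (B.imp (A.and B)))
  | andE1 {A B : Formula} : Prov T ((A.and B).imp A)
  | andE2 {A B : Formula} : Prov T ((A.and B).imp B)
  | orI1 {A B : Formula} : Prov T (A.imp (A.or B))
  | orI2 {A B : Formula} : Prov T (B.imp (A.or B))
  | orE {A B C : Formula} : Prov T ((A.imp C).imp ((B.imp C).imp ((A.or B).imp C)))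
  | exfalso {A : Formula} : Prov T (Formula.falsum.imp A)
  | mp {A B : Formula} : Prov T (A.imp B) → Prov T A → Prov T B
  | allNE {n : ℕ} {A : Formula} {u : Term} (h : FreeForN u n A) :
      Prov T ((Formula.allN n A).imp (subN n u A))
  | allNI {n : ℕ} {A B : Formula} (h : n ∉ freeN A) :
      Prov T (A.imp B) → Prov T (A.imp (Formula.allN n B))
  | exNI {n : ℕ} {A : Formula} {u : Term} (h : FreeForN u n A) :
      Prov T ((subN n u A).imp (Formula.exN n A))
  | exNE {n : ℕ} {A B : Formula} (h : n ∉ freeN B) :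
      Prov T (A.imp B) → Prov T ((Formula.exN n A).imp B)
  | allFE {a : ℕ} {A : Formula} {ψ : Func} (h : FreeForF ψ a A) :
      Prov T ((Formula.allF a A).imp (subF a ψ A))
  | allFI {a : ℕ} {A B : Formula} (h : a ∉ freeF A) :
      Prov T (A.imp B) → Prov T (A.imp (Formula.allF a B))
  | exFI {a : ℕ} {A : Formula} {ψ : Func} (h : FreeForF ψ a A) :
      Prov T ((subF a ψ A).imp (Formula.exF a A))
  | exFE {a : ℕ} {A B : Formula} (h : a ∉ freeF B) :
      Prov T (A.imp B) → Prov T ((Formula.exF a A).imp B)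
  | genN {n : ℕ} {A : Formula} : Prov T A → Prov T (Formula.allN n A)
  | genF {a : ℕ} {A : Formula} : Prov T A → Prov T (Formula.allF a A)

/-- Two systems (sets of axioms over the same language) have the same theorems. -/
def SameTheory (T₁ T₂ : Set Formula) : Prop := ∀ A, Prov T₁ A ↔ Prov T₂ A

/-- T₁ is a subsystem of T₂: every theorem of T₁ is a theorem of T₂. -/
def Subsystem (T₁ T₂ : Set Formula) : Prop := ∀ A, Prov T₁ A → Prov T₂ A

/-- The Gödel–Gentzen negative translation: hereditarily replace A∨B by
¬(¬A & ¬B) and ∃A by ¬∀¬A (prime formulas, being equations between terms of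
type 0, are their own translations). -/
def gTrans : Formula → Formula
  | .eq s t => .eq s t
  | .falsum => .falsum
  | .and A B => .and (gTrans A) (gTrans B)
  | .or A B => Formula.neg ((Formula.neg (gTrans A)).and (Formula.neg (gTrans B)))
  | .imp A B => .imp (gTrans A) (gTrans B)
  | .allN x A => .allN x (gTrans A)
  | .exN x A => Formula.neg (.allN x (Formula.neg (gTrans A)))
  | .allF a A => .allF a (gTrans A)
  | .exF a A => Formula.neg (.allF a (Formula.neg (gTrans A)))

/-! ### The base system IA₁ -/

/-- Universally valid equations: the defining axioms of the finitely many
primitive recursive constants of the language (all equations true in the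
intended interpretation under every assignment). -/
def validEq : Set Formula :=
  {F | ∃ s t : Term, F = Formula.eq s t ∧ ∀ ρ σ, evalT ρ σ s = evalT ρ σ t}

/-- Leibniz equality schema (includes the open equality axiom
∀x∀y(x=y → α(x)=α(y))). -/
def eqAx : Set Formula :=
  {F | ∃ (n : ℕ) (s t : Term) (A : Formula),
    FreeForN s n A ∧ FreeForN t n A ∧
    F = (Formula.eq s t).imp ((subN n s A).imp (subN n t A))}

/-- Successor axioms. -/
def sucAx : Set Formula :=
  {F | ∃ s t : Term, F = (Formula.eq (Term.succ s) (Term.succ t)).imp (.eq s t)} ∪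
  {F | ∃ t : Term, F = Formula.neg (.eq (Term.succ t) Term.zero)}

/-- Mathematical induction, for all formulas of the two-sorted language. -/
def indAx : Set Formula :=
  {F | ∃ (x : ℕ) (A : Formula),
    F = ((subN x Term.zero A).and
          (Formula.allN x (A.imp (subN x (Term.succ (Term.var x)) A)))).imp
        (Formula.allN x A)}

/-- λ-reduction: (λx.t)(s) = t[s/x], for s free for x in t. -/
def lamAx : Set Formula :=
  {F | ∃ (x : ℕ) (t s : Term), tFForN s x t ∧
    F = Formula.eq (Term.app (Func.lam x t) s) (tSubN x s t)}

/-- IA₁: two-sorted intuitionistic arithmetic. -/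
def IA1 : Set Formula := validEq ∪ eqAx ∪ sucAx ∪ indAx ∪ lamAx

/-- The double negation schema ¬¬A → A of classical logic. -/
def DNE : Set Formula := {F | ∃ A : Formula, F = (Formula.nneg A).imp A}

/-- The Gödel–Gentzen negative translations of all theorems of S + (¬¬A→A). -/
def gThms (S : Set Formula) : Set Formula :=
  {F | ∃ A : Formula, Prov (S ∪ DNE) A ∧ F = gTrans A}

/-- The minimum classical extension S^{+g} of S: the least extension of S
proving the negative translation of every theorem of S + (¬¬A→A). -/
def minClassExt (S : Set Formula) : Set Formula := S ∪ gThms S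

/-! ### Classes of formulas -/

/-- "Quantifier-free" formulas: no function quantifiers and only bounded
number quantifiers. -/
inductive IsQF : Formula → Prop
  | eq (s t : Term) : IsQF (.eq s t)
  | falsum : IsQF .falsum
  | and {A B} : IsQF A → IsQF B → IsQF (A.and B)
  | or {A B} : IsQF A → IsQF B → IsQF (A.or B)
  | imp {A B} : IsQF A → IsQF B → IsQF (A.imp B)
  | ballN {x t A} (h : x ∉ tFN t) (hA : IsQF A) :
      IsQF (.allN x ((tle (Term.var x) t).imp A))
  | bexN {x t A} (h : x ∉ tFN t) (hA : IsQF A) :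
      IsQF (.exN x ((tle (Term.var x) t).and A))

/-- Arithmetical formulas: no function quantifiers (function parameters allowed). -/
def IsArith : Formula → Prop
  | .eq _ _ => True
  | .falsum => True
  | .and A B => IsArith A ∧ IsArith B
  | .or A B => IsArith A ∧ IsArith B
  | .imp A B => IsArith A ∧ IsArith B
  | .allN _ A => IsArith A
  | .exN _ A => IsArith A
  | .allF _ _ => False
  | .exF _ _ => False

/-- Negative formulas: containing neither ∨ nor ∃. -/
def IsNeg : Formula → Prop
  | .eq _ _ => True
  | .falsum => True
  | .and A B => IsNeg A ∧ IsNeg B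
  | .or _ _ => False
  | .imp A B => IsNeg A ∧ IsNeg B
  | .allN _ A => IsNeg A
  | .exN _ _ => False
  | .allF _ A => IsNeg A
  | .exF _ _ => False

/-! ### The axiom schemas -/

/-- An instance of countable choice AC₀₀ : ∀x∃yA(x,y) → ∃α∀xA(x,α(x)). -/
def ac00Inst (x y a : ℕ) (A : Formula) : Formula :=
  (Formula.allN x (.exN y A)).imp
    (.exF a (.allN x (subN y (Term.app (Func.fvar a) (Term.var x)) A)))

def ac00Side (x y a : ℕ) (A : Formula) : Prop :=
  x ≠ y ∧ a ∉ freeF A ∧ FreeForN (Term.app (Func.fvar a) (Term.var x)) y A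

/-- AC₀₀ (full countable choice for numbers). -/
def AC00 : Set Formula :=
  {F | ∃ x y a A, ac00Side x y a A ∧ F = ac00Inst x y a A}

/-- qf-AC₀₀. -/
def qfAC00 : Set Formula :=
  {F | ∃ x y a A, IsQF A ∧ ac00Side x y a A ∧ F = ac00Inst x y a A}

/-- AC^Ar₀₀ (arithmetical countable choice). -/
def arAC00 : Set Formula :=
  {F | ∃ x y a A, IsArith A ∧ ac00Side x y a A ∧ F = ac00Inst x y a A}

/-- ∃!y A, rendered as ∃yA & ∀y∀z(A & A[z/y] → y = z). -/
def exUnique (y z : ℕ) (A : Formula) : Formula :=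
  (Formula.exN y A).and
    (.allN y (.allN z ((A.and (subN y (Term.var z) A)).imp
      (.eq (Term.var y) (Term.var z)))))

/-- AC₀₀! (countable comprehension): ∀x∃!yA(x,y) → ∃α∀xA(x,α(x)). -/
def AC00u : Set Formula :=
  {F | ∃ x y z a A, z ≠ y ∧ z ∉ freeN A ∧ FreeForN (Term.var z) y A ∧
    ac00Side x y a A ∧
    F = (Formula.allN x (exUnique y z A)).imp
          (.exF a (.allN x (subN y (Term.app (Func.fvar a) (Term.var x)) A)))}

/-- AC₀₁ : ∀x∃αA(x,α) → ∃β∀xA(x,λy.β(⟨x,y⟩)). -/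
def AC01 : Set Formula :=
  {F | ∃ (x a b y : ℕ) (A : Formula), b ∉ freeF A ∧ b ≠ a ∧ y ≠ x ∧
    FreeForF (Func.lam y (Term.app (Func.fvar b)
      (Term.pair (Term.var x) (Term.var y)))) a A ∧
    F = (Formula.allN x (.exF a A)).imp
          (.exF b (.allN x (subF a (Func.lam y (Term.app (Func.fvar b)
            (Term.pair (Term.var x) (Term.var y)))) A)))}

/-- CF_d : ∀x(A(x) ∨ ¬A(x)) → ∃α∀x[α(x)≤1 & (α(x)=0 ↔ A(x))]. -/
def CFd : Set Formula :=
  {F | ∃ (x a : ℕ) (A : Formula), a ∉ freeF A ∧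
    F = (Formula.allN x (A.or (Formula.neg A))).imp
          (.exF a (.allN x ((tle (Term.app (Func.fvar a) (Term.var x))
              (Term.succ Term.zero)).and
            (Formula.iff (.eq (Term.app (Func.fvar a) (Term.var x)) Term.zero) A))))}

/-- WCF₀⁻ : ¬¬∃ζ∀x(ζ(x)=0 ↔ A(x)) for negative A. -/
def WCF0neg : Set Formula :=
  {F | ∃ (x z : ℕ) (A : Formula), IsNeg A ∧ z ∉ freeF A ∧
    F = Formula.nneg (.exF z (.allN x
      (Formula.iff (.eq (Term.app (Func.fvar z) (Term.var x)) Term.zero) A)))}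

/-- Markov's Principle MP₁ : ∀α(¬∀x¬α(x)=0 → ∃x α(x)=0). -/
def MP1 : Formula :=
  .allF 0 ((Formula.neg (.allN 0 (Formula.neg
      (.eq (Term.app (Func.fvar 0) (Term.var 0)) Term.zero)))).imp
    (.exN 0 (.eq (Term.app (Func.fvar 0) (Term.var 0)) Term.zero)))

/-- Σ⁰₁-DNS₀ : ∀α[∀x¬¬∃y α(⟨x,y⟩)=0 → ¬¬∀x∃y α(⟨x,y⟩)=0]. -/
def Sigma01DNS0 : Formula :=
  .allF 0 ((Formula.allN 0 (Formula.nneg (.exN 1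
      (.eq (Term.app (Func.fvar 0) (Term.pair (Term.var 0) (Term.var 1))) Term.zero)))).imp
    (Formula.nneg (.allN 0 (.exN 1
      (.eq (Term.app (Func.fvar 0) (Term.pair (Term.var 0) (Term.var 1))) Term.zero)))))

/-- DNS₁ : ∀ρ[∀α¬¬∃x ρ(ᾱ(x))=0 → ¬¬∀α∃x ρ(ᾱ(x))=0]. -/
def DNS1 : Formula :=
  .allF 0 ((Formula.allF 1 (Formula.nneg (.exN 0
      (.eq (Term.app (Func.fvar 0) (Term.bar (Func.fvar 1) (Term.var 0))) Term.zero)))).imp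
    (Formula.nneg (.allF 1 (.exN 0
      (.eq (Term.app (Func.fvar 0) (Term.bar (Func.fvar 1) (Term.var 0))) Term.zero)))))

/-- B(α) : α is a binary sequence, ∀x α(x) ≤ 1. -/
def binF (a x : ℕ) : Formula :=
  .allN x (tle (Term.app (Func.fvar a) (Term.var x)) (Term.succ Term.zero))

/-- GDK : ∀ρ[∀α_{B(α)}¬¬∃x ρ(ᾱ(x))=0 → ¬¬∀α_{B(α)}∃x ρ(ᾱ(x))=0]. -/
def GDK : Formula :=
  .allF 0 ((Formula.allF 1 ((binF 1 1).imp (Formula.nneg (.exN 0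
      (.eq (Term.app (Func.fvar 0) (Term.bar (Func.fvar 1) (Term.var 0))) Term.zero))))).imp
    (Formula.nneg (.allF 1 ((binF 1 1).imp (.exN 0
      (.eq (Term.app (Func.fvar 0) (Term.bar (Func.fvar 1) (Term.var 0))) Term.zero))))))

/-- FT₁ (the fan theorem):
∀ρ[∀α_{B(α)}∃x ρ(ᾱ(x))=0 → ∃n∀α_{B(α)}∃x≤n ρ(ᾱ(x))=0]. -/
def FT1 : Formula :=
  .allF 0 ((Formula.allF 1 ((binF 1 1).imp (.exN 0
      (.eq (Term.app (Func.fvar 0) (Term.bar (Func.fvar 1) (Term.var 0))) Term.zero)))).imp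
    (.exN 2 (.allF 1 ((binF 1 1).imp (.exN 0 ((tle (Term.var 0) (Term.var 2)).and
      (.eq (Term.app (Func.fvar 0) (Term.bar (Func.fvar 1) (Term.var 0))) Term.zero)))))))

/-- An instance of bar induction BI₁ with bar ρ (function variable r) and
inductive predicate A(w). -/
def biInst (r aa xv w s : ℕ) (A : Formula) : Formula :=
  ((Formula.allF aa (.exN xv (.eq
      (Term.app (Func.fvar r) (Term.bar (Func.fvar aa) (Term.var xv))) Term.zero))).and
    ((Formula.allN w (((seqF (Term.var w)).and
        (.eq (Term.app (Func.fvar r) (Term.var w)) Term.zero)).imp A)).and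
      (Formula.allN w (((seqF (Term.var w)).and
        (.allN s (subN w (Term.cat (Term.var w)
          (Term.sing (Term.succ (Term.var s)))) A))).imp A)))).imp
  (subN w Term.empt A)

/-- BI₁ (bar induction, Kleene's ˣ26.3b). -/
def BI1 : Set Formula :=
  {F | ∃ r aa xv w s A, aa ≠ r ∧ aa ∉ freeF A ∧ s ≠ w ∧ s ∉ freeN A ∧
    FreeForN (Term.cat (Term.var w) (Term.sing (Term.succ (Term.var s)))) w A ∧
    F = biInst r aa xv w s A}

/-- Π⁰₁-WCF₀ : ∀α¬¬∃ζ∀x(ζ(x)=0 ↔ ∀y α(⟨x,y⟩)=0). -/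
def Pi01WCF0 : Formula :=
  .allF 0 (Formula.nneg (.exF 1 (.allN 0
    (Formula.iff (.eq (Term.app (Func.fvar 1) (Term.var 0)) Term.zero)
      (.allN 1 (.eq (Term.app (Func.fvar 0)
        (Term.pair (Term.var 0) (Term.var 1))) Term.zero))))))

/-- Π¹₁-WCF₀ : ∀γ¬¬∃ζ∀x(ζ(x)=0 ↔ ∀α∃y γ(ᾱ(⟨x,y⟩))=0). -/
def Pi11WCF0 : Formula :=
  .allF 0 (Formula.nneg (.exF 1 (.allN 0
    (Formula.iff (.eq (Term.app (Func.fvar 1) (Term.var 0)) Term.zero)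
      (.allF 2 (.exN 1 (.eq (Term.app (Func.fvar 0)
        (Term.bar (Func.fvar 2) (Term.pair (Term.var 0) (Term.var 1)))) Term.zero)))))))

/-- T(e,x,y) as a formula. -/
def TFml (e x y : Term) : Formula := .eq (Term.kT e x y) Term.zero

/-- GR(φ): "φ is general recursive",
∃e[∀x∃yT(e,x,y) & ∀x∀y(T(e,x,y) → U(y)=φ(x))]. -/
def GRof (φ : Func) : Formula :=
  .exN 0 ((Formula.allN 1 (.exN 2 (TFml (Term.var 0) (Term.var 1) (Term.var 2)))).and
    (.allN 1 (.allN 2 ((TFml (Term.var 0) (Term.var 1) (Term.var 2)).imp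
      (.eq (Term.kU (Term.var 2)) (Term.app φ (Term.var 1)))))))

/-- Church's Thesis CT₁ : ∀α GR(α). -/
def CT1 : Formula := .allF 0 (GRof (Func.fvar 0))

/-- ∀α¬¬GR(α). -/
def nnGR : Formula := .allF 0 (Formula.nneg (GRof (Func.fvar 0)))

/-- {τ}[α](x) = y in Kleene's sense: τ(⟨x⟩∗ᾱ(y)) > 0 with minimal y,
used to state continuous choice. -/
def ccApp (t a x y : ℕ) : Formula :=
  .eq (Term.app (Func.fvar t)
    (Term.cat (Term.sing (Term.var x)) (Term.bar (Func.fvar a) (Term.var y)))) Term.zero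

/-- An instance of Kleene's strong continuous choice CC₁₁ (Brouwer's principle
for functions, ˣ27.1): ∀α∃βA(α,β) → ∃τ∀α[{τ}[α] is completely defined &
∀β({τ}[α] = β → A(α,β))]. -/
def cc11Inst (a b t x y z : ℕ) (A : Formula) : Formula :=
  (Formula.allF a (.exF b A)).imp
    (.exF t (.allF a
      ((Formula.allN x (.exN y (Formula.neg (ccApp t a x y)))).and
        (.allF b ((Formula.allN x (.exN y
          ((Formula.eq (Term.app (Func.fvar t) (Term.cat (Term.sing (Term.var x))
              (Term.bar (Func.fvar a) (Term.var y))))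
            (Term.succ (Term.app (Func.fvar b) (Term.var x)))).and
           (.allN z ((tlt (Term.var z) (Term.var y)).imp (ccApp t a x z)))))).imp A)))))

/-- CC₁₁ as a schema. -/
def CC11 : Set Formula :=
  {F | ∃ a b t x y z A, t ∉ freeF A ∧ t ≠ a ∧ t ≠ b ∧ a ≠ b ∧
    x ∉ freeN A ∧ y ∉ freeN A ∧ z ∉ freeN A ∧
    x ≠ y ∧ y ≠ z ∧ x ≠ z ∧
    F = cc11Inst a b t x y z A}

/-! ### The systems -/

/-- Intuitionistic recursive analysis IRA = IA₁ + qf-AC₀₀. -/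
def IRA : Set Formula := IA1 ∪ qfAC00

/-- Kleene's basic system B = IA₁ + AC₀₁ + BI₁. -/
def Bsys : Set Formula := IA1 ∪ AC01 ∪ BI1

/-- Markov's recursive analysis MRA = IRA + CT₁ + MP₁. -/
def MRA : Set Formula := IRA ∪ {CT1, MP1}

/-- The subsystems of B considered in Theorem 5.1. -/
def theoremSystems : List (Set Formula) :=
  [IA1, IRA, IA1 ∪ arAC00, IA1 ∪ AC00u, IA1 ∪ AC00, IA1 ∪ AC01,
   IA1 ∪ {FT1}, IRA ∪ {FT1}, IRA ∪ BI1, IA1 ∪ AC00 ∪ BI1, Bsys]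

end NegInterp

namespace NegInterp
open Formula

/-! ### Propositional helper calculus with hypotheses -/

inductive PProv (H : Set Formula) : Formula → Prop
  | hyp {A : Formula} (h : A ∈ H) : PProv H A
  | k {A B : Formula} : PProv H (A.imp (B.imp A))
  | s {A B C : Formula} : PProv H ((A.imp (B.imp C)).imp ((A.imp B).imp (A.imp C)))
  | andI {A B : Formula} : PProv H (A.imp (B.imp (A.and B)))
  | andE1 {A B : Formula} : PProv H ((A.and B).imp A)
  | andE2 {A B : Formula} : PProv H ((A.and B).imp B)
  | orI1 {A B : Formula} : PProv H (A.imp (A.or B))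
  | orI2 {A B : Formula} : PProv H (B.imp (A.or B))
  | orE {A B C : Formula} : PProv H ((A.imp C).imp ((B.imp C).imp ((A.or B).imp C)))
  | exfalso {A : Formula} : PProv H (Formula.falsum.imp A)
  | mp {A B : Formula} : PProv H (A.imp B) → PProv H A → PProv H B

theorem PProv.pid {H : Set Formula} (A : Formula) : PProv H (A.imp A) :=
  .mp (.mp (.s (B := A.imp A)) .k) .k

theorem PProv.ded {H : Set Formula} {A B : Formula}
    (h : PProv (insert A H) B) : PProv H (A.imp B) := by
  induction h with
  | hyp h =>
    rcases Set.mem_insert_iff.mp h with rfl | h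
    · exact PProv.pid _
    · exact .mp .k (.hyp h)
  | k => exact .mp .k .k
  | s => exact .mp .k .s
  | andI => exact .mp .k .andI
  | andE1 => exact .mp .k .andE1
  | andE2 => exact .mp .k .andE2
  | orI1 => exact .mp .k .orI1
  | orI2 => exact .mp .k .orI2
  | orE => exact .mp .k .orE
  | exfalso => exact .mp .k .exfalso
  | mp _ _ ih1 ih2 => exact .mp (.mp .s ih1) ih2

theorem PProv.toProv {H : Set Formula} {T : Set Formula} {A : Formula}
    (h : PProv H A) (hh : ∀ B ∈ H, Prov T B) : Prov T A := by
  induction h with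
  | hyp h => exact hh _ h
  | k => exact .k
  | s => exact .s
  | andI => exact .andI
  | andE1 => exact .andE1
  | andE2 => exact .andE2
  | orI1 => exact .orI1
  | orI2 => exact .orI2
  | orE => exact .orE
  | exfalso => exact .exfalso
  | mp _ _ ih1 ih2 => exact ih1.mp ih2

theorem pp0 {T : Set Formula} {A : Formula} (h : PProv ∅ A) : Prov T A :=
  h.toProv (by simp)

theorem pp1 {T : Set Formula} {X A : Formula} (hX : Prov T X)
    (h : PProv {X} A) : Prov T A :=
  h.toProv (by intro B hB; rw [Set.mem_singleton_iff] at hB; subst hB; exact hX)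

theorem compM {T : Set Formula} {A B C : Formula}
    (h1 : Prov T (A.imp B)) (h2 : Prov T (B.imp C)) : Prov T (A.imp C) :=
  .mp (.mp .s (.mp .k h2)) h1

theorem impSwap {T : Set Formula} {X Y Z : Formula}
    (h : Prov T (X.imp (Y.imp Z))) (hy : Prov T Y) : Prov T (X.imp Z) :=
  .mp (.mp .s h) (.mp .k hy)

theorem contraM {T : Set Formula} {A B : Formula}
    (h : Prov T (A.imp B)) (C : Formula) : Prov T ((B.imp C).imp (A.imp C)) :=
  pp1 h (.ded (.ded (.mp (.hyp (A := B.imp C) (by simp))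
    (.mp (.hyp (A := A.imp B) (by simp)) (.hyp (A := A) (by simp))))))

theorem nnegMono {T : Set Formula} {A B : Formula}
    (h : Prov T (A.imp B)) : Prov T ((Formula.nneg A).imp (Formula.nneg B)) :=
  contraM (contraM h Formula.falsum) Formula.falsum

theorem dnegI {T : Set Formula} (A : Formula) : Prov T (A.imp (Formula.nneg A)) :=
  pp0 (.ded (.ded (.mp (.hyp (A := A.neg) (by simp)) (.hyp (A := A) (by simp)))))

theorem tripleNeg {T : Set Formula} (A : Formula) :
    Prov T ((Formula.nneg (Formula.neg A)).imp (Formula.neg A)) :=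
  pp0 (.ded (.ded (.mp (.hyp (show Formula.nneg (Formula.neg A) ∈ _ by simp))
    (.ded (.mp (.hyp (show Formula.neg A ∈ _ by simp)) (.hyp (by simp)))))))

theorem andIntroM {T : Set Formula} {X A B : Formula}
    (h1 : Prov T (X.imp A)) (h2 : Prov T (X.imp B)) : Prov T (X.imp (A.and B)) :=
  .mp (.mp .s (compM h1 .andI)) h2

end NegInterp
namespace NegInterp
open Term Func

/-! ### All number variables (free or bound) of a term/functor -/

mutual
def tVarsN : Term → Finset ℕ
  | .var n => {n}
  | .zero => ∅
  | .empt => ∅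
  | .succ t => tVarsN t
  | .sing t => tVarsN t
  | .lh t => tVarsN t
  | .seqc t => tVarsN t
  | .kU t => tVarsN t
  | .add s t => tVarsN s ∪ tVarsN t
  | .mul s t => tVarsN s ∪ tVarsN t
  | .sub s t => tVarsN s ∪ tVarsN t
  | .pair s t => tVarsN s ∪ tVarsN t
  | .cat s t => tVarsN s ∪ tVarsN t
  | .kT e x y => tVarsN e ∪ tVarsN x ∪ tVarsN y
  | .app φ t => fVarsN φ ∪ tVarsN t
  | .bar φ t => fVarsN φ ∪ tVarsN t
def fVarsN : Func → Finset ℕ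
  | .fvar _ => ∅
  | .lam x t => insert x (tVarsN t)
end

mutual
theorem tFN_subset : ∀ (t : Term) (x : ℕ), x ∈ tFN t → x ∈ tVarsN t
  | .var n, x, h => by simpa [tFN, tVarsN] using h
  | .zero, x, h => by simp [tFN] at h
  | .empt, x, h => by simp [tFN] at h
  | .succ t, x, h => tFN_subset t x h
  | .sing t, x, h => tFN_subset t x h
  | .lh t, x, h => tFN_subset t x h
  | .seqc t, x, h => tFN_subset t x h
  | .kU t, x, h => tFN_subset t x h
  | .add s t, x, h => by
      rcases h with h | h
      · exact Finset.mem_union_left _ (tFN_subset s x h)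
      · exact Finset.mem_union_right _ (tFN_subset t x h)
  | .mul s t, x, h => by
      rcases h with h | h
      · exact Finset.mem_union_left _ (tFN_subset s x h)
      · exact Finset.mem_union_right _ (tFN_subset t x h)
  | .sub s t, x, h => by
      rcases h with h | h
      · exact Finset.mem_union_left _ (tFN_subset s x h)
      · exact Finset.mem_union_right _ (tFN_subset t x h)
  | .pair s t, x, h => by
      rcases h with h | h
      · exact Finset.mem_union_left _ (tFN_subset s x h)
      · exact Finset.mem_union_right _ (tFN_subset t x h)
  | .cat s t, x, h => by
      rcases h with h | h
      · exact Finset.mem_union_left _ (tFN_subset s x h)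
      · exact Finset.mem_union_right _ (tFN_subset t x h)
  | .kT e a b, x, h => by
      rcases h with (h | h) | h
      · exact Finset.mem_union_left _ (Finset.mem_union_left _ (tFN_subset e x h))
      · exact Finset.mem_union_left _ (Finset.mem_union_right _ (tFN_subset a x h))
      · exact Finset.mem_union_right _ (tFN_subset b x h)
  | .app φ t, x, h => by
      rcases h with h | h
      · exact Finset.mem_union_left _ (fFN_subset φ x h)
      · exact Finset.mem_union_right _ (tFN_subset t x h)
  | .bar φ t, x, h => by
      rcases h with h | h
      · exact Finset.mem_union_left _ (fFN_subset φ x h)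
      · exact Finset.mem_union_right _ (tFN_subset t x h)
theorem fFN_subset : ∀ (φ : Func) (x : ℕ), x ∈ fFN φ → x ∈ fVarsN φ
  | .fvar _, x, h => by simp [fFN] at h
  | .lam y t, x, h => by
      rcases h with ⟨h1, _⟩
      exact Finset.mem_insert_of_mem (tFN_subset t x h1)
end

end NegInterp
namespace NegInterp
open Term Func

mutual
theorem tSubN_eq (v : ℕ) (u : Term) : ∀ (t : Term), v ∉ tVarsN t → tSubN v u t = t
  | .var m, h => by
      have : ¬ (m = v) := by simp [tVarsN] at h; omega
      simp [tSubN, this]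
  | .zero, _ => rfl
  | .empt, _ => rfl
  | .succ t, h => by simp [tSubN, tSubN_eq v u t (by simpa [tVarsN] using h)]
  | .sing t, h => by simp [tSubN, tSubN_eq v u t (by simpa [tVarsN] using h)]
  | .lh t, h => by simp [tSubN, tSubN_eq v u t (by simpa [tVarsN] using h)]
  | .seqc t, h => by simp [tSubN, tSubN_eq v u t (by simpa [tVarsN] using h)]
  | .kU t, h => by simp [tSubN, tSubN_eq v u t (by simpa [tVarsN] using h)]
  | .add s t, h => by
      have h1 : v ∉ tVarsN s := fun hh => h (by simp [tVarsN, hh])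
      have h2 : v ∉ tVarsN t := fun hh => h (by simp [tVarsN, hh])
      simp [tSubN, tSubN_eq v u s h1, tSubN_eq v u t h2]
  | .mul s t, h => by
      have h1 : v ∉ tVarsN s := fun hh => h (by simp [tVarsN, hh])
      have h2 : v ∉ tVarsN t := fun hh => h (by simp [tVarsN, hh])
      simp [tSubN, tSubN_eq v u s h1, tSubN_eq v u t h2]
  | .sub s t, h => by
      have h1 : v ∉ tVarsN s := fun hh => h (by simp [tVarsN, hh])
      have h2 : v ∉ tVarsN t := fun hh => h (by simp [tVarsN, hh])
      simp [tSubN, tSubN_eq v u s h1, tSubN_eq v u t h2]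
  | .pair s t, h => by
      have h1 : v ∉ tVarsN s := fun hh => h (by simp [tVarsN, hh])
      have h2 : v ∉ tVarsN t := fun hh => h (by simp [tVarsN, hh])
      simp [tSubN, tSubN_eq v u s h1, tSubN_eq v u t h2]
  | .cat s t, h => by
      have h1 : v ∉ tVarsN s := fun hh => h (by simp [tVarsN, hh])
      have h2 : v ∉ tVarsN t := fun hh => h (by simp [tVarsN, hh])
      simp [tSubN, tSubN_eq v u s h1, tSubN_eq v u t h2]
  | .kT e a b, h => by
      have h1 : v ∉ tVarsN e := fun hh => h (by simp [tVarsN, hh])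
      have h2 : v ∉ tVarsN a := fun hh => h (by simp [tVarsN, hh])
      have h3 : v ∉ tVarsN b := fun hh => h (by simp [tVarsN, hh])
      simp [tSubN, tSubN_eq v u e h1, tSubN_eq v u a h2, tSubN_eq v u b h3]
  | .app φ t, h => by
      have h1 : v ∉ fVarsN φ := fun hh => h (by simp [tVarsN, hh])
      have h2 : v ∉ tVarsN t := fun hh => h (by simp [tVarsN, hh])
      simp [tSubN, fSubN_eq v u φ h1, tSubN_eq v u t h2]
  | .bar φ t, h => by
      have h1 : v ∉ fVarsN φ := fun hh => h (by simp [tVarsN, hh])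
      have h2 : v ∉ tVarsN t := fun hh => h (by simp [tVarsN, hh])
      simp [tSubN, fSubN_eq v u φ h1, tSubN_eq v u t h2]
theorem fSubN_eq (v : ℕ) (u : Term) : ∀ (φ : Func), v ∉ fVarsN φ → fSubN v u φ = φ
  | .fvar a, _ => rfl
  | .lam x t, h => by
      have hx : ¬ (x = v) := by simp [fVarsN] at h; omega
      have h2 : v ∉ tVarsN t := fun hh => h (by simp [fVarsN, hh])
      simp [fSubN, hx, tSubN_eq v u t h2]
end

mutual
theorem tFForN_any (v : ℕ) (u : Term) : ∀ (t : Term), v ∉ tVarsN t → tFForN u v t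
  | .var _, _ => trivial
  | .zero, _ => trivial
  | .empt, _ => trivial
  | .succ t, h => tFForN_any v u t (by simpa [tVarsN] using h)
  | .sing t, h => tFForN_any v u t (by simpa [tVarsN] using h)
  | .lh t, h => tFForN_any v u t (by simpa [tVarsN] using h)
  | .seqc t, h => tFForN_any v u t (by simpa [tVarsN] using h)
  | .kU t, h => tFForN_any v u t (by simpa [tVarsN] using h)
  | .add s t, h =>
      ⟨tFForN_any v u s (fun hh => h (by simp [tVarsN, hh])),
       tFForN_any v u t (fun hh => h (by simp [tVarsN, hh]))⟩
  | .mul s t, h =>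
      ⟨tFForN_any v u s (fun hh => h (by simp [tVarsN, hh])),
       tFForN_any v u t (fun hh => h (by simp [tVarsN, hh]))⟩
  | .sub s t, h =>
      ⟨tFForN_any v u s (fun hh => h (by simp [tVarsN, hh])),
       tFForN_any v u t (fun hh => h (by simp [tVarsN, hh]))⟩
  | .pair s t, h =>
      ⟨tFForN_any v u s (fun hh => h (by simp [tVarsN, hh])),
       tFForN_any v u t (fun hh => h (by simp [tVarsN, hh]))⟩
  | .cat s t, h =>
      ⟨tFForN_any v u s (fun hh => h (by simp [tVarsN, hh])),
       tFForN_any v u t (fun hh => h (by simp [tVarsN, hh]))⟩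
  | .kT e a b, h =>
      ⟨tFForN_any v u e (fun hh => h (by simp [tVarsN, hh])),
       tFForN_any v u a (fun hh => h (by simp [tVarsN, hh])),
       tFForN_any v u b (fun hh => h (by simp [tVarsN, hh]))⟩
  | .app φ t, h =>
      ⟨fFForN_any v u φ (fun hh => h (by simp [tVarsN, hh])),
       tFForN_any v u t (fun hh => h (by simp [tVarsN, hh]))⟩
  | .bar φ t, h =>
      ⟨fFForN_any v u φ (fun hh => h (by simp [tVarsN, hh])),
       tFForN_any v u t (fun hh => h (by simp [tVarsN, hh]))⟩
theorem fFForN_any (v : ℕ) (u : Term) : ∀ (φ : Func), v ∉ fVarsN φ → fFForN u v φ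
  | .fvar _, _ => trivial
  | .lam x t, h =>
      Or.inr (Or.inl (fun hv => h (Finset.mem_insert_of_mem
        (tFN_subset t v hv))))
end

/-! ### Self-substitution is the identity -/

mutual
theorem tSubN_self (n : ℕ) : ∀ (t : Term), tSubN n (.var n) t = t
  | .var m => by by_cases h : m = n <;> simp [tSubN, h]
  | .zero => rfl
  | .empt => rfl
  | .succ t => by simp [tSubN, tSubN_self n t]
  | .sing t => by simp [tSubN, tSubN_self n t]
  | .lh t => by simp [tSubN, tSubN_self n t]
  | .seqc t => by simp [tSubN, tSubN_self n t]
  | .kU t => by simp [tSubN, tSubN_self n t]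
  | .add s t => by simp [tSubN, tSubN_self n s, tSubN_self n t]
  | .mul s t => by simp [tSubN, tSubN_self n s, tSubN_self n t]
  | .sub s t => by simp [tSubN, tSubN_self n s, tSubN_self n t]
  | .pair s t => by simp [tSubN, tSubN_self n s, tSubN_self n t]
  | .cat s t => by simp [tSubN, tSubN_self n s, tSubN_self n t]
  | .kT e a b => by simp [tSubN, tSubN_self n e, tSubN_self n a, tSubN_self n b]
  | .app φ t => by simp [tSubN, fSubN_self n φ, tSubN_self n t]
  | .bar φ t => by simp [tSubN, fSubN_self n φ, tSubN_self n t]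
theorem fSubN_self (n : ℕ) : ∀ (φ : Func), fSubN n (.var n) φ = φ
  | .fvar _ => rfl
  | .lam x t => by by_cases h : x = n <;> simp [fSubN, h, tSubN_self n t]
end

mutual
theorem tFForN_self (n : ℕ) : ∀ (t : Term), tFForN (.var n) n t
  | .var _ => trivial
  | .zero => trivial
  | .empt => trivial
  | .succ t => tFForN_self n t
  | .sing t => tFForN_self n t
  | .lh t => tFForN_self n t
  | .seqc t => tFForN_self n t
  | .kU t => tFForN_self n t
  | .add s t => ⟨tFForN_self n s, tFForN_self n t⟩
  | .mul s t => ⟨tFForN_self n s, tFForN_self n t⟩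
  | .sub s t => ⟨tFForN_self n s, tFForN_self n t⟩
  | .pair s t => ⟨tFForN_self n s, tFForN_self n t⟩
  | .cat s t => ⟨tFForN_self n s, tFForN_self n t⟩
  | .kT e a b => ⟨tFForN_self n e, tFForN_self n a, tFForN_self n b⟩
  | .app φ t => ⟨fFForN_self n φ, tFForN_self n t⟩
  | .bar φ t => ⟨fFForN_self n φ, tFForN_self n t⟩
theorem fFForN_self (n : ℕ) : ∀ (φ : Func), fFForN (.var n) n φ
  | .fvar _ => trivial
  | .lam x t => by
      by_cases h : x = n
      · exact Or.inl h
      · exact Or.inr (Or.inr ⟨by simp [tFN, h], tFForN_self n t⟩)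
end

mutual
theorem tSubF_self (a : ℕ) : ∀ (t : Term), tSubF a (.fvar a) t = t
  | .var _ => rfl
  | .zero => rfl
  | .empt => rfl
  | .succ t => by simp [tSubF, tSubF_self a t]
  | .sing t => by simp [tSubF, tSubF_self a t]
  | .lh t => by simp [tSubF, tSubF_self a t]
  | .seqc t => by simp [tSubF, tSubF_self a t]
  | .kU t => by simp [tSubF, tSubF_self a t]
  | .add s t => by simp [tSubF, tSubF_self a s, tSubF_self a t]
  | .mul s t => by simp [tSubF, tSubF_self a s, tSubF_self a t]
  | .sub s t => by simp [tSubF, tSubF_self a s, tSubF_self a t]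
  | .pair s t => by simp [tSubF, tSubF_self a s, tSubF_self a t]
  | .cat s t => by simp [tSubF, tSubF_self a s, tSubF_self a t]
  | .kT e x y => by simp [tSubF, tSubF_self a e, tSubF_self a x, tSubF_self a y]
  | .app φ t => by simp [tSubF, fSubF_self a φ, tSubF_self a t]
  | .bar φ t => by simp [tSubF, fSubF_self a φ, tSubF_self a t]
theorem fSubF_self (a : ℕ) : ∀ (φ : Func), fSubF a (.fvar a) φ = φ
  | .fvar b => by by_cases h : b = a <;> simp [fSubF, h]
  | .lam x t => by simp [fSubF, tSubF_self a t]
end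

mutual
theorem tFForF_self (a : ℕ) : ∀ (t : Term), tFForF (.fvar a) a t
  | .var _ => trivial
  | .zero => trivial
  | .empt => trivial
  | .succ t => tFForF_self a t
  | .sing t => tFForF_self a t
  | .lh t => tFForF_self a t
  | .seqc t => tFForF_self a t
  | .kU t => tFForF_self a t
  | .add s t => ⟨tFForF_self a s, tFForF_self a t⟩
  | .mul s t => ⟨tFForF_self a s, tFForF_self a t⟩
  | .sub s t => ⟨tFForF_self a s, tFForF_self a t⟩
  | .pair s t => ⟨tFForF_self a s, tFForF_self a t⟩
  | .cat s t => ⟨tFForF_self a s, tFForF_self a t⟩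
  | .kT e x y => ⟨tFForF_self a e, tFForF_self a x, tFForF_self a y⟩
  | .app φ t => ⟨fFForF_self a φ, tFForF_self a t⟩
  | .bar φ t => ⟨fFForF_self a φ, tFForF_self a t⟩
theorem fFForF_self (a : ℕ) : ∀ (φ : Func), fFForF (.fvar a) a φ
  | .fvar _ => trivial
  | .lam x t => Or.inr ⟨by simp [fFN], tFForF_self a t⟩
end

end NegInterp
namespace NegInterp
open Formula

theorem subN_self (n : ℕ) : ∀ (A : Formula), subN n (.var n) A = A
  | .eq s t => by simp [subN, tSubN_self]
  | .falsum => rfl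
  | .and A B => by simp [subN, subN_self n A, subN_self n B]
  | .or A B => by simp [subN, subN_self n A, subN_self n B]
  | .imp A B => by simp [subN, subN_self n A, subN_self n B]
  | .allN x A => by by_cases h : x = n <;> simp [subN, h, subN_self n A]
  | .exN x A => by by_cases h : x = n <;> simp [subN, h, subN_self n A]
  | .allF a A => by simp [subN, subN_self n A]
  | .exF a A => by simp [subN, subN_self n A]

theorem FreeForN_self (n : ℕ) : ∀ (A : Formula), FreeForN (.var n) n A
  | .eq s t => ⟨tFForN_self n s, tFForN_self n t⟩
  | .falsum => trivial
  | .and A B => ⟨FreeForN_self n A, FreeForN_self n B⟩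
  | .or A B => ⟨FreeForN_self n A, FreeForN_self n B⟩
  | .imp A B => ⟨FreeForN_self n A, FreeForN_self n B⟩
  | .allN m A => by
      by_cases h : m = n
      · exact Or.inl h
      · exact Or.inr (Or.inr ⟨by simp [tFN, h], FreeForN_self n A⟩)
  | .exN m A => by
      by_cases h : m = n
      · exact Or.inl h
      · exact Or.inr (Or.inr ⟨by simp [tFN, h], FreeForN_self n A⟩)
  | .allF b A => Or.inr ⟨by simp [tFF], FreeForN_self n A⟩
  | .exF b A => Or.inr ⟨by simp [tFF], FreeForN_self n A⟩

theorem subF_self (a : ℕ) : ∀ (A : Formula), subF a (.fvar a) A = A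
  | .eq s t => by simp [subF, tSubF_self]
  | .falsum => rfl
  | .and A B => by simp [subF, subF_self a A, subF_self a B]
  | .or A B => by simp [subF, subF_self a A, subF_self a B]
  | .imp A B => by simp [subF, subF_self a A, subF_self a B]
  | .allN x A => by simp [subF, subF_self a A]
  | .exN x A => by simp [subF, subF_self a A]
  | .allF b A => by by_cases h : b = a <;> simp [subF, h, subF_self a A]
  | .exF b A => by by_cases h : b = a <;> simp [subF, h, subF_self a A]

theorem FreeForF_self (a : ℕ) : ∀ (A : Formula), FreeForF (.fvar a) a A
  | .eq s t => ⟨tFForF_self a s, tFForF_self a t⟩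
  | .falsum => trivial
  | .and A B => ⟨FreeForF_self a A, FreeForF_self a B⟩
  | .or A B => ⟨FreeForF_self a A, FreeForF_self a B⟩
  | .imp A B => ⟨FreeForF_self a A, FreeForF_self a B⟩
  | .allN m A => Or.inr ⟨by simp [fFN], FreeForF_self a A⟩
  | .exN m A => Or.inr ⟨by simp [fFN], FreeForF_self a A⟩
  | .allF b A => by
      by_cases h : b = a
      · exact Or.inl h
      · exact Or.inr (Or.inr ⟨by simp [fFF, h], FreeForF_self a A⟩)
  | .exF b A => by
      by_cases h : b = a
      · exact Or.inl h
      · exact Or.inr (Or.inr ⟨by simp [fFF, h], FreeForF_self a A⟩)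

/-! ### The negative translation: free variables, substitution, free-for -/

theorem freeN_gTrans : ∀ (A : Formula), freeN (gTrans A) = freeN A
  | .eq s t => rfl
  | .falsum => rfl
  | .and A B => by simp [gTrans, freeN, freeN_gTrans A, freeN_gTrans B]
  | .or A B => by
      simp [gTrans, freeN, Formula.neg, freeN_gTrans A, freeN_gTrans B]
  | .imp A B => by simp [gTrans, freeN, freeN_gTrans A, freeN_gTrans B]
  | .allN x A => by simp [gTrans, freeN, freeN_gTrans A]
  | .exN x A => by simp [gTrans, freeN, Formula.neg, freeN_gTrans A]
  | .allF a A => by simp [gTrans, freeN, freeN_gTrans A]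
  | .exF a A => by simp [gTrans, freeN, Formula.neg, freeN_gTrans A]

theorem freeF_gTrans : ∀ (A : Formula), freeF (gTrans A) = freeF A
  | .eq s t => rfl
  | .falsum => rfl
  | .and A B => by simp [gTrans, freeF, freeF_gTrans A, freeF_gTrans B]
  | .or A B => by
      simp [gTrans, freeF, Formula.neg, freeF_gTrans A, freeF_gTrans B]
  | .imp A B => by simp [gTrans, freeF, freeF_gTrans A, freeF_gTrans B]
  | .allN x A => by simp [gTrans, freeF, freeF_gTrans A]
  | .exN x A => by simp [gTrans, freeF, Formula.neg, freeF_gTrans A]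
  | .allF a A => by simp [gTrans, freeF, freeF_gTrans A]
  | .exF a A => by simp [gTrans, freeF, Formula.neg, freeF_gTrans A]

theorem gTrans_subN (n : ℕ) (u : Term) :
    ∀ (A : Formula), gTrans (subN n u A) = subN n u (gTrans A)
  | .eq s t => rfl
  | .falsum => rfl
  | .and A B => by simp [gTrans, subN, gTrans_subN n u A, gTrans_subN n u B]
  | .or A B => by
      simp [gTrans, subN, Formula.neg, gTrans_subN n u A, gTrans_subN n u B]
  | .imp A B => by simp [gTrans, subN, gTrans_subN n u A, gTrans_subN n u B]
  | .allN x A => by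
      by_cases h : x = n <;> simp [gTrans, subN, h, gTrans_subN n u A]
  | .exN x A => by
      by_cases h : x = n <;>
        simp [gTrans, subN, Formula.neg, h, gTrans_subN n u A]
  | .allF a A => by simp [gTrans, subN, gTrans_subN n u A]
  | .exF a A => by simp [gTrans, subN, Formula.neg, gTrans_subN n u A]

theorem gTrans_subF (a : ℕ) (ψ : Func) :
    ∀ (A : Formula), gTrans (subF a ψ A) = subF a ψ (gTrans A)
  | .eq s t => rfl
  | .falsum => rfl
  | .and A B => by simp [gTrans, subF, gTrans_subF a ψ A, gTrans_subF a ψ B]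
  | .or A B => by
      simp [gTrans, subF, Formula.neg, gTrans_subF a ψ A, gTrans_subF a ψ B]
  | .imp A B => by simp [gTrans, subF, gTrans_subF a ψ A, gTrans_subF a ψ B]
  | .allN x A => by simp [gTrans, subF, gTrans_subF a ψ A]
  | .exN x A => by simp [gTrans, subF, Formula.neg, gTrans_subF a ψ A]
  | .allF b A => by
      by_cases h : b = a <;> simp [gTrans, subF, h, gTrans_subF a ψ A]
  | .exF b A => by
      by_cases h : b = a <;>
        simp [gTrans, subF, Formula.neg, h, gTrans_subF a ψ A]

theorem FreeForN_gTrans (u : Term) (n : ℕ) :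
    ∀ (A : Formula), FreeForN u n A → FreeForN u n (gTrans A)
  | .eq s t, h => h
  | .falsum, h => h
  | .and A B, h => ⟨FreeForN_gTrans u n A h.1, FreeForN_gTrans u n B h.2⟩
  | .or A B, h =>
      ⟨⟨⟨FreeForN_gTrans u n A h.1, trivial⟩,
        ⟨FreeForN_gTrans u n B h.2, trivial⟩⟩, trivial⟩
  | .imp A B, h => ⟨FreeForN_gTrans u n A h.1, FreeForN_gTrans u n B h.2⟩
  | .allN m A, h => by
      rcases h with h | h | ⟨h1, h2⟩
      · exact Or.inl h
      · exact Or.inr (Or.inl (by rwa [freeN_gTrans]))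
      · exact Or.inr (Or.inr ⟨h1, FreeForN_gTrans u n A h2⟩)
  | .exN m A, h => by
      rcases h with h | h | ⟨h1, h2⟩
      · exact ⟨Or.inl h, trivial⟩
      · exact ⟨Or.inr (Or.inl (by
          simpa [freeN, Formula.neg, freeN_gTrans] using h)), trivial⟩
      · exact ⟨Or.inr (Or.inr ⟨h1, ⟨FreeForN_gTrans u n A h2, trivial⟩⟩), trivial⟩
  | .allF b A, h => by
      rcases h with h | ⟨h1, h2⟩
      · exact Or.inl (by rwa [freeN_gTrans])
      · exact Or.inr ⟨h1, FreeForN_gTrans u n A h2⟩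
  | .exF b A, h => by
      rcases h with h | ⟨h1, h2⟩
      · exact ⟨Or.inl (by
          simpa [freeN, Formula.neg, freeN_gTrans] using h), trivial⟩
      · exact ⟨Or.inr ⟨h1, ⟨FreeForN_gTrans u n A h2, trivial⟩⟩, trivial⟩

theorem FreeForF_gTrans (ψ : Func) (a : ℕ) :
    ∀ (A : Formula), FreeForF ψ a A → FreeForF ψ a (gTrans A)
  | .eq s t, h => h
  | .falsum, h => h
  | .and A B, h => ⟨FreeForF_gTrans ψ a A h.1, FreeForF_gTrans ψ a B h.2⟩
  | .or A B, h =>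
      ⟨⟨⟨FreeForF_gTrans ψ a A h.1, trivial⟩,
        ⟨FreeForF_gTrans ψ a B h.2, trivial⟩⟩, trivial⟩
  | .imp A B, h => ⟨FreeForF_gTrans ψ a A h.1, FreeForF_gTrans ψ a B h.2⟩
  | .allN m A, h => by
      rcases h with h | ⟨h1, h2⟩
      · exact Or.inl (by rwa [freeF_gTrans])
      · exact Or.inr ⟨h1, FreeForF_gTrans ψ a A h2⟩
  | .exN m A, h => by
      rcases h with h | ⟨h1, h2⟩
      · exact ⟨Or.inl (by
          simpa [freeF, Formula.neg, freeF_gTrans] using h), trivial⟩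
      · exact ⟨Or.inr ⟨h1, ⟨FreeForF_gTrans ψ a A h2, trivial⟩⟩, trivial⟩
  | .allF b A, h => by
      rcases h with h | h | ⟨h1, h2⟩
      · exact Or.inl h
      · exact Or.inr (Or.inl (by rwa [freeF_gTrans]))
      · exact Or.inr (Or.inr ⟨h1, FreeForF_gTrans ψ a A h2⟩)
  | .exF b A, h => by
      rcases h with h | h | ⟨h1, h2⟩
      · exact ⟨Or.inl h, trivial⟩
      · exact ⟨Or.inr (Or.inl (by
          simpa [freeF, Formula.neg, freeF_gTrans] using h)), trivial⟩
      · exact ⟨Or.inr (Or.inr ⟨h1, ⟨FreeForF_gTrans ψ a A h2, trivial⟩⟩), trivial⟩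

end NegInterp
namespace NegInterp
open Formula

/-! ### Axiom access helpers -/

theorem validEq_mem {s t : Term} (h : ∀ ρ σ, evalT ρ σ s = evalT ρ σ t) :
    Prov IA1 (.eq s t) :=
  Prov.ax (Or.inl (Or.inl (Or.inl (Or.inl ⟨s, t, rfl, h⟩))))

theorem leib {n : ℕ} {s t : Term} {A : Formula}
    (h1 : FreeForN s n A) (h2 : FreeForN t n A) :
    Prov IA1 ((Formula.eq s t).imp ((subN n s A).imp (subN n t A))) :=
  Prov.ax (Or.inl (Or.inl (Or.inl (Or.inr ⟨n, s, t, A, h1, h2, rfl⟩))))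

theorem sucNe (u : Term) : Prov IA1 (Formula.neg (.eq (.succ u) .zero)) :=
  Prov.ax (Or.inl (Or.inl (Or.inr (Or.inr ⟨u, rfl⟩))))

theorem indax (x : ℕ) (A : Formula) :
    Prov IA1 (((subN x Term.zero A).and
        (Formula.allN x (A.imp (subN x (Term.succ (Term.var x)) A)))).imp
      (Formula.allN x A)) :=
  Prov.ax (Or.inl (Or.inr ⟨x, A, rfl⟩))

/-! ### Stability of equations -/

def stabZ : Formula :=
  (Formula.nneg (.eq (.var 0) .zero)).imp (.eq (.var 0) .zero)

theorem zeroStab : Prov IA1 (Formula.allN 0 stabZ) := by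
  have e1 : subN 0 Term.zero stabZ
      = (Formula.nneg (.eq .zero .zero)).imp (.eq .zero .zero) := by
    simp [stabZ, subN, tSubN, Formula.nneg, Formula.neg]
  have base : Prov IA1 (subN 0 Term.zero stabZ) := by
    rw [e1]; exact .mp .k (validEq_mem (fun _ _ => rfl))
  have e2 : subN 0 (Term.succ (.var 0)) stabZ
      = (Formula.nneg (.eq (.succ (.var 0)) .zero)).imp
          (.eq (.succ (.var 0)) .zero) := by
    simp [stabZ, subN, tSubN, Formula.nneg, Formula.neg]
  set P : Formula := .eq (.succ (.var 0)) .zero with hP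
  have stepBody : Prov IA1 ((Formula.nneg P).imp P) :=
    pp1 (sucNe (.var 0)) (.ded (.mp .exfalso
      (.mp (.hyp (A := Formula.nneg P) (by simp))
        (.hyp (A := Formula.neg P) (by simp [hP])))))
  have step : Prov IA1 (Formula.allN 0
      (stabZ.imp (subN 0 (Term.succ (.var 0)) stabZ))) := by
    rw [e2]; exact Prov.genN (.mp .k stepBody)
  exact (indax 0 stabZ).mp ((Prov.andI.mp base).mp step)

theorem stab0 (m : Term) :
    Prov IA1 ((Formula.nneg (.eq m .zero)).imp (.eq m .zero)) := by
  have ff : FreeForN m 0 stabZ := by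
    simp [stabZ, FreeForN, tFForN, Formula.nneg, Formula.neg]
  have e3 : subN 0 m stabZ
      = (Formula.nneg (.eq m .zero)).imp (.eq m .zero) := by
    simp [stabZ, subN, tSubN, Formula.nneg, Formula.neg]
  have h := Prov.mp (Prov.allNE (u := m) ff) zeroStab
  rwa [e3] at h

/-- The conditional term: t if n = 0 … used with n := |s−t|. -/
def condT (s t n : Term) : Term :=
  .add (.mul t (.sub (.succ .zero) n))
       (.mul s (.sub (.succ .zero) (.sub (.succ .zero) n)))

theorem eqStab (s t : Term) :
    Prov IA1 ((Formula.nneg (.eq s t)).imp (.eq s t)) := by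
  obtain ⟨v, hvs, hvt⟩ : ∃ v, v ∉ tVarsN s ∧ v ∉ tVarsN t := by
    refine ⟨(tVarsN s ∪ tVarsN t).sup id + 1, fun h => ?_, fun h => ?_⟩
    · have h2 := Finset.le_sup (f := id) (Finset.mem_union_left (tVarsN t) h)
      simp only [id] at h2; omega
    · have h2 := Finset.le_sup (f := id) (Finset.mem_union_right (tVarsN s) h)
      simp only [id] at h2; omega
  have hs : ∀ u : Term, tSubN v u s = s := fun u => tSubN_eq v u s hvs
  have ht : ∀ u : Term, tSubN v u t = t := fun u => tSubN_eq v u t hvt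
  have ffs : ∀ u : Term, tFForN u v s := fun u => tFForN_any v u s hvs
  have fft : ∀ u : Term, tFForN u v t := fun u => tFForN_any v u t hvt
  -- (eq s t) → (eq m 0) where m codes |s−t|
  have lb1 := leib (n := v) (s := s) (t := t)
      (A := .eq (.add (.sub s (.var v)) (.sub (.var v) s)) .zero)
      ⟨⟨⟨ffs s, trivial⟩, ⟨trivial, ffs s⟩⟩, trivial⟩
      ⟨⟨⟨ffs t, trivial⟩, ⟨trivial, ffs t⟩⟩, trivial⟩
  have e1 : subN v s (.eq (.add (.sub s (.var v)) (.sub (.var v) s)) .zero)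
      = .eq (.add (.sub s s) (.sub s s)) .zero := by
    simp [subN, tSubN, hs]
  have e2 : subN v t (.eq (.add (.sub s (.var v)) (.sub (.var v) s)) .zero)
      = .eq (.add (.sub s t) (.sub t s)) .zero := by
    simp [subN, tSubN, hs]
  rw [e1, e2] at lb1
  have V1 : Prov IA1 (.eq (.add (.sub s s) (.sub s s)) .zero) :=
    validEq_mem (by intro ρ σ; simp [evalT])
  have C1 : Prov IA1 ((Formula.eq s t).imp
      (.eq (.add (.sub s t) (.sub t s)) .zero)) := impSwap lb1 V1
  -- (eq m 0) → (eq s t)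
  have ffc : ∀ u : Term, FreeForN u v (Formula.eq s (condT s t (.var v))) :=
    fun u => by simp [condT, FreeForN, tFForN, ffs u, fft u]
  have lb2 := leib (n := v) (s := .add (.sub s t) (.sub t s)) (t := .zero)
      (A := .eq s (condT s t (.var v))) (ffc _) (ffc _)
  have e3 : subN v (.add (.sub s t) (.sub t s)) (Formula.eq s (condT s t (.var v)))
      = .eq s (condT s t (.add (.sub s t) (.sub t s))) := by
    simp [condT, subN, tSubN, hs, ht]
  have e4 : subN v Term.zero (Formula.eq s (condT s t (.var v)))
      = .eq s (condT s t .zero) := by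
    simp [condT, subN, tSubN, hs, ht]
  rw [e3, e4] at lb2
  have V2 : Prov IA1 (.eq s (condT s t (.add (.sub s t) (.sub t s)))) := by
    refine validEq_mem (fun ρ σ => ?_)
    simp only [condT, evalT]
    rcases eq_or_ne (evalT ρ σ s) (evalT ρ σ t) with h | h
    · rw [h]; simp
    · have h1 : 1 - ((evalT ρ σ s - evalT ρ σ t) + (evalT ρ σ t - evalT ρ σ s))
          = 0 := by omega
      rw [h1]; simp
  have C2a : Prov IA1 ((Formula.eq (.add (.sub s t) (.sub t s)) .zero).imp
      (.eq s (condT s t .zero))) := impSwap lb2 V2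
  have V3 : Prov IA1 (.eq (condT s t .zero) t) :=
    validEq_mem (by intro ρ σ; simp [condT, evalT])
  have lb3 := leib (n := v) (s := condT s t .zero) (t := t)
      (A := .eq s (.var v)) ⟨ffs _, trivial⟩ ⟨ffs _, trivial⟩
  have e5 : subN v (condT s t .zero) (Formula.eq s (.var v))
      = .eq s (condT s t .zero) := by simp [subN, tSubN, hs]
  have e6 : subN v t (Formula.eq s (.var v)) = .eq s t := by
    simp [subN, tSubN, hs]
  rw [e5, e6] at lb3
  have C2b : Prov IA1 ((Formula.eq s (condT s t .zero)).imp (.eq s t)) :=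
    lb3.mp V3
  exact compM (compM (nnegMono C1)
    (stab0 (.add (.sub s t) (.sub t s)))) (compM C2a C2b)

end NegInterp
namespace NegInterp
open Formula

/-- Stability of negatively translated formulas, provable in IA₁. -/
theorem stabStable : ∀ (A : Formula),
    Prov IA1 ((Formula.nneg (gTrans A)).imp (gTrans A))
  | .eq s t => eqStab s t
  | .falsum => by
      simp only [gTrans]
      exact pp0 (.ded (.mp (.hyp (A := Formula.nneg .falsum) (by simp))
        (.ded (.hyp (A := Formula.falsum) (by simp)))))
  | .and A B =>
      andIntroM (compM (nnegMono .andE1) (stabStable A))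
        (compM (nnegMono .andE2) (stabStable B))
  | .or A B => tripleNeg _
  | .imp A B => by
      have step1 : Prov IA1 ((Formula.nneg ((gTrans A).imp (gTrans B))).imp
          ((gTrans A).imp (Formula.nneg (gTrans B)))) :=
        pp0 (.ded (.ded (.ded (.mp
          (.hyp (A := Formula.nneg ((gTrans A).imp (gTrans B))) (by simp))
          (.ded (.mp (.hyp (A := Formula.neg (gTrans B)) (by simp))
            (.mp (.hyp (A := (gTrans A).imp (gTrans B)) (by simp))
              (.hyp (A := gTrans A) (by simp)))))))))
      have step2 : Prov IA1 (((gTrans A).imp (Formula.nneg (gTrans B))).imp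
          ((gTrans A).imp (gTrans B))) :=
        pp1 (stabStable B) (.ded (.ded (.mp
          (.hyp (A := (Formula.nneg (gTrans B)).imp (gTrans B)) (by simp))
          (.mp (.hyp (A := (gTrans A).imp (Formula.nneg (gTrans B))) (by simp))
            (.hyp (A := gTrans A) (by simp))))))
      exact compM step1 step2
  | .allN n A => by
      have h1 := Prov.allNE (T := IA1) (n := n) (A := gTrans A)
        (u := .var n) (FreeForN_self n _)
      rw [subN_self] at h1
      have h2 := compM (nnegMono h1) (stabStable A)
      refine Prov.allNI ?_ h2
      simp [gTrans, freeN, Formula.nneg, Formula.neg]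
  | .exN n A => tripleNeg _
  | .allF a A => by
      have h1 := Prov.allFE (T := IA1) (a := a) (A := gTrans A)
        (ψ := .fvar a) (FreeForF_self a _)
      rw [subF_self] at h1
      have h2 := compM (nnegMono h1) (stabStable A)
      refine Prov.allFI ?_ h2
      simp [gTrans, freeF, Formula.nneg, Formula.neg]
  | .exF a A => tripleNeg _

/-- IA₁ proves the negative translation of DNS₁. -/
theorem gDNS1 : Prov IA1 (gTrans DNS1) := by
  set E : Formula :=
    .eq (.app (.fvar 0) (.bar (.fvar 1) (.var 0))) .zero with hE
  set N : Formula := Formula.neg (.allN 0 (Formula.neg E)) with hN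
  show Prov IA1 (.allF 0 ((Formula.allF 1 (Formula.nneg N)).imp
      (Formula.nneg (.allF 1 N))))
  have h1 := Prov.allFE (T := IA1) (a := 1) (A := Formula.nneg N)
    (ψ := .fvar 1) (FreeForF_self 1 _)
  rw [subF_self] at h1
  have h2 := compM h1 (tripleNeg (.allN 0 (Formula.neg E)))
  have h3 : Prov IA1 ((Formula.allF 1 (Formula.nneg N)).imp (.allF 1 N)) := by
    refine Prov.allFI ?_ h2
    simp [freeF]
  exact Prov.genF (compM h3 (dnegI _))

end NegInterp
namespace NegInterp
open Formula

/-- Monotonicity of provability: axiom-wise interpretation. -/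
theorem Prov.mono {T T' : Set Formula} (h : ∀ B ∈ T, Prov T' B) :
    ∀ {A : Formula}, Prov T A → Prov T' A := by
  intro A hA
  induction hA with
  | ax hm => exact h _ hm
  | k => exact .k
  | s => exact .s
  | andI => exact .andI
  | andE1 => exact .andE1
  | andE2 => exact .andE2
  | orI1 => exact .orI1
  | orI2 => exact .orI2
  | orE => exact .orE
  | exfalso => exact .exfalso
  | mp _ _ ih1 ih2 => exact ih1.mp ih2
  | allNE hf => exact Prov.allNE hf
  | allNI hf _ ih => exact Prov.allNI hf ih
  | exNI hf => exact Prov.exNI hf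
  | exNE hf _ ih => exact Prov.exNE hf ih
  | allFE hf => exact Prov.allFE hf
  | allFI hf _ ih => exact Prov.allFI hf ih
  | exFI hf => exact Prov.exFI hf
  | exFE hf _ ih => exact Prov.exFE hf ih
  | genN _ ih => exact Prov.genN ih
  | genF _ ih => exact Prov.genF ih

/-- Soundness of the negative translation over classical logic. -/
theorem negSound {T T' : Set Formula}
    (hIA : ∀ B, Prov IA1 B → Prov T' B)
    (hax : ∀ A ∈ T, Prov T' (gTrans A)) :
    ∀ {A : Formula}, Prov (T ∪ DNE) A → Prov T' (gTrans A) := by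
  intro A h
  induction h with
  | ax h =>
    rcases h with h | h
    · exact hax _ h
    · obtain ⟨B, rfl⟩ := h
      exact hIA _ (stabStable B)
  | k => exact .k
  | s => exact .s
  | andI => exact .andI
  | andE1 => exact .andE1
  | andE2 => exact .andE2
  | @orI1 A B =>
    exact pp0 (.ded (.ded (.mp
      (.mp (.andE1 (B := Formula.neg (gTrans B))) (.hyp (A := (Formula.neg (gTrans A)).and (Formula.neg (gTrans B))) (by simp)))
      (.hyp (A := gTrans A) (by simp)))))
  | @orI2 A B =>
    exact pp0 (.ded (.ded (.mp
      (.mp (.andE2 (A := Formula.neg (gTrans A))) (.hyp (A := (Formula.neg (gTrans A)).and (Formula.neg (gTrans B))) (by simp)))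
      (.hyp (A := gTrans B) (by simp)))))
  | @orE A B C =>
    simp only [gTrans]
    refine pp1 (hIA _ (stabStable C)) ?_
    refine .ded (.ded (.ded ?_))
    refine .mp (.hyp (A := (Formula.nneg (gTrans C)).imp (gTrans C)) (by simp)) ?_
    refine .ded ?_
    refine .mp (.hyp (A := Formula.neg ((Formula.neg (gTrans A)).and (Formula.neg (gTrans B)))) (by simp)) ?_
    refine .mp (.mp .andI ?_) ?_
    · exact .ded (.mp (.hyp (A := Formula.neg (gTrans C)) (by simp))
        (.mp (.hyp (A := (gTrans A).imp (gTrans C)) (by simp))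
          (.hyp (A := gTrans A) (by simp))))
    · exact .ded (.mp (.hyp (A := Formula.neg (gTrans C)) (by simp))
        (.mp (.hyp (A := (gTrans B).imp (gTrans C)) (by simp))
          (.hyp (A := gTrans B) (by simp))))
  | exfalso => exact .exfalso
  | mp _ _ ih1 ih2 => exact ih1.mp ih2
  | @allNE n A u hf =>
    have h1 := Prov.allNE (T := T') (u := u) (FreeForN_gTrans u n A hf)
    rwa [← gTrans_subN] at h1
  | @allNI n A B hf _ ih =>
    exact Prov.allNI (by rwa [freeN_gTrans]) ih
  | @exNI n A u hf =>
    simp only [gTrans]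
    have h1 := Prov.allNE (T := T') (n := n) (A := Formula.neg (gTrans A))
      (u := u) ⟨FreeForN_gTrans u n A hf, trivial⟩
    have e : subN n u (Formula.neg (gTrans A))
        = Formula.neg (subN n u (gTrans A)) := rfl
    rw [e] at h1
    rw [gTrans_subN n u A]
    exact pp1 h1 (.ded (.ded (.mp
      (.mp (.hyp (A := (Formula.allN n (Formula.neg (gTrans A))).imp
          (Formula.neg (subN n u (gTrans A)))) (by simp))
        (.hyp (A := Formula.allN n (Formula.neg (gTrans A))) (by simp)))
      (.hyp (A := subN n u (gTrans A)) (by simp)))))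
  | @exNE n A B hf _ ih =>
    have c1 : Prov T' ((Formula.neg (gTrans B)).imp (Formula.neg (gTrans A))) :=
      contraM ih Formula.falsum
    have c2 : Prov T' ((Formula.neg (gTrans B)).imp
        (Formula.allN n (Formula.neg (gTrans A)))) := by
      refine Prov.allNI ?_ c1
      simp [freeN, Formula.neg, freeN_gTrans, hf]
    have c3 := contraM c2 Formula.falsum
    exact compM c3 (hIA _ (stabStable B))
  | @allFE a A ψ hf =>
    have h1 := Prov.allFE (T := T') (ψ := ψ) (FreeForF_gTrans ψ a A hf)
    rwa [← gTrans_subF] at h1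
  | @allFI a A B hf _ ih =>
    exact Prov.allFI (by rwa [freeF_gTrans]) ih
  | @exFI a A ψ hf =>
    simp only [gTrans]
    have h1 := Prov.allFE (T := T') (a := a) (A := Formula.neg (gTrans A))
      (ψ := ψ) ⟨FreeForF_gTrans ψ a A hf, trivial⟩
    have e : subF a ψ (Formula.neg (gTrans A))
        = Formula.neg (subF a ψ (gTrans A)) := rfl
    rw [e] at h1
    rw [gTrans_subF a ψ A]
    exact pp1 h1 (.ded (.ded (.mp
      (.mp (.hyp (A := (Formula.allF a (Formula.neg (gTrans A))).imp
          (Formula.neg (subF a ψ (gTrans A)))) (by simp))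
        (.hyp (A := Formula.allF a (Formula.neg (gTrans A))) (by simp)))
      (.hyp (A := subF a ψ (gTrans A)) (by simp)))))
  | @exFE a A B hf _ ih =>
    have c1 : Prov T' ((Formula.neg (gTrans B)).imp (Formula.neg (gTrans A))) :=
      contraM ih Formula.falsum
    have c2 : Prov T' ((Formula.neg (gTrans B)).imp
        (Formula.allF a (Formula.neg (gTrans A)))) := by
      refine Prov.allFI ?_ c1
      simp [freeF, Formula.neg, freeF_gTrans, hf]
    have c3 := contraM c2 Formula.falsum
    exact compM c3 (hIA _ (stabStable B))
  | genN _ ih => exact Prov.genN ih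
  | genF _ ih => exact Prov.genF ih

end NegInterp
namespace NegInterp

/-- IA₁ proves the negative translation (DNS₁)^g; therefore,
for any system S with IA₁ ⊆ S ⊆ B, the minimum classical extension of
S + DNS₁ is S^{+g} + DNS₁. -/
theorem statement16 :
    Prov IA1 (gTrans DNS1) ∧
    ∀ S : Set Formula, Subsystem IA1 S → Subsystem S Bsys →
      SameTheory (minClassExt (S ∪ {DNS1})) (minClassExt S ∪ {DNS1}) := by
  refine ⟨gDNS1, ?_⟩
  intro S hIAS _ A
  constructor
  · intro h
    refine Prov.mono ?_ h
    intro B hB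
    rcases hB with (hB | hB) | hB
    · exact Prov.ax (Or.inl (Or.inl hB))
    · exact Prov.ax (Or.inr hB)
    · obtain ⟨C, hC, rfl⟩ := hB
      refine negSound ?_ ?_ hC
      · intro B hB
        exact Prov.mono (fun D hD => Prov.ax (Or.inl (Or.inl hD))) (hIAS _ hB)
      · intro D hD
        rcases hD with hD | hD
        · exact Prov.ax (Or.inl (Or.inr ⟨D, Prov.ax (Or.inl hD), rfl⟩))
        · rw [Set.mem_singleton_iff] at hD
          subst hD
          exact Prov.mono (fun D hD => Prov.ax (Or.inl (Or.inl hD)))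
            (hIAS _ gDNS1)
  · intro h
    refine Prov.mono ?_ h
    intro B hB
    rcases hB with (hB | hB) | hB
    · exact Prov.ax (Or.inl (Or.inl hB))
    · obtain ⟨C, hC, rfl⟩ := hB
      refine Prov.ax (Or.inr ⟨C, ?_, rfl⟩)
      refine Prov.mono ?_ hC
      intro D hD
      rcases hD with hD | hD
      · exact Prov.ax (Or.inl (Or.inl hD))
      · exact Prov.ax (Or.inr hD)
    · exact Prov.ax (Or.inl (Or.inr hB))

end NegInterp
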